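/- Let ξ_1, …, ξ_n be independent random variables with E[ξ_k] = 0 and E|ξ_k|^p < ∞ for some p with 1 ≤ p ≤ 2, for each k = 1, …, n, and let ζ_n = ξ_1 + ⋯ + ξ_n. Then E|ζ_n|^p ≤ (2 − 1/n) · Σ_{k=1}^n E|ξ_k|^p. -/

import Mathlib

open MeasureTheory ProbabilityTheory Finset

namespace VonBahrEsseenAux

/-- The (sub)gradient of `u ↦ |u| ^ p`, divided by `p`. -/
noncomputable def gf (p : ℝ) (u : ℝ) : ℝ := u * |u| ^ (p - 2)

lemma gf_neg (p u : ℝ) : gf p (-u) = - gf p u := by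
  simp [gf, abs_neg, neg_mul]

lemma gf_nonneg_eq {p : ℝ} (hp : 1 < p) {a : ℝ} (ha : 0 ≤ a) :
    gf p a = a ^ (p - 1) := by
  rcases ha.lt_or_eq with h | h
  · rw [gf, abs_of_pos h, show p - 1 = 1 + (p - 2) by ring, Real.rpow_add h, Real.rpow_one]
  · rw [← h, gf, Real.zero_rpow (by linarith : p - 1 ≠ 0)]
    simp

lemma abs_gf_le {p : ℝ} (hp : 1 ≤ p) (u : ℝ) : |gf p u| ≤ |u| ^ (p - 1) := by
  rcases eq_or_ne u 0 with rfl | hu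
  · simpa [gf] using Real.rpow_nonneg (abs_nonneg (0:ℝ)) (p - 1)
  · have h0 : (0:ℝ) < |u| := abs_pos.2 hu
    have : |gf p u| = |u| ^ (p - 1) := by
      rw [gf, abs_mul, abs_of_nonneg (Real.rpow_nonneg (abs_nonneg u) _),
        show p - 1 = 1 + (p - 2) by ring, Real.rpow_add h0, Real.rpow_one]
    exact this.le

lemma rpow_add_le_add_rpow_real {a b q : ℝ} (ha : 0 ≤ a) (hb : 0 ≤ b) (h0 : 0 ≤ q)
    (h1 : q ≤ 1) : (a + b) ^ q ≤ a ^ q + b ^ q := by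
  have h := NNReal.rpow_add_le_add_rpow a.toNNReal b.toNNReal h0 h1
  have h2 := NNReal.coe_le_coe.2 h
  push_cast at h2
  rwa [Real.coe_toNNReal a ha, Real.coe_toNNReal b hb] at h2

lemma rpow_sub_rpow_le {a b q : ℝ} (hb : 0 ≤ b) (hba : b ≤ a) (h0 : 0 ≤ q) (h1 : q ≤ 1) :
    a ^ q - b ^ q ≤ (a - b) ^ q := by
  have h := rpow_add_le_add_rpow_real (sub_nonneg.2 hba) hb h0 h1
  rw [sub_add_cancel] at h
  linarith

/-- Hölder continuity (with constant 2) of the signed power function. -/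
lemma gf_holder {p : ℝ} (hp1 : 1 < p) (hp2 : p ≤ 2) (a b : ℝ) :
    |gf p a - gf p b| ≤ 2 * |a - b| ^ (p - 1) := by
  have hq0 : (0:ℝ) ≤ p - 1 := by linarith
  have hq1 : p - 1 ≤ 1 := by linarith
  -- case of two nonnegative arguments, ordered
  have key0 : ∀ a b : ℝ, 0 ≤ b → b ≤ a → |gf p a - gf p b| ≤ 2 * |a - b| ^ (p - 1) := by
    intro a b hb hba
    have ha : 0 ≤ a := hb.trans hba
    rw [gf_nonneg_eq hp1 ha, gf_nonneg_eq hp1 hb]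
    have hmono : b ^ (p-1) ≤ a ^ (p-1) := Real.rpow_le_rpow hb hba hq0
    rw [abs_of_nonneg (sub_nonneg.2 hmono), abs_of_nonneg (sub_nonneg.2 hba)]
    have h := rpow_sub_rpow_le hb hba hq0 hq1
    nlinarith [Real.rpow_nonneg (sub_nonneg.2 hba) (p-1)]
  have keypos : ∀ a b : ℝ, 0 ≤ a → 0 ≤ b → |gf p a - gf p b| ≤ 2 * |a - b| ^ (p - 1) := by
    intro a b ha hb
    rcases le_total b a with h | h
    · exact key0 a b hb h
    · rw [abs_sub_comm, abs_sub_comm a b]; exact key0 b a ha h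
  have keymix : ∀ a b : ℝ, 0 ≤ a → b ≤ 0 → |gf p a - gf p b| ≤ 2 * |a - b| ^ (p - 1) := by
    intro a b ha hb
    have hnb : 0 ≤ -b := by linarith
    have hgb : gf p b = -((-b) ^ (p-1)) := by
      have h := gf_neg p (-b)
      rw [neg_neg] at h
      rw [h, gf_nonneg_eq hp1 hnb]
    have hab : (0:ℝ) ≤ a - b := by linarith
    have h1 : a ^ (p-1) ≤ (a - b) ^ (p-1) := Real.rpow_le_rpow ha (by linarith) hq0
    have h2 : (-b) ^ (p-1) ≤ (a - b) ^ (p-1) := Real.rpow_le_rpow hnb (by linarith) hq0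
    rw [gf_nonneg_eq hp1 ha, hgb, abs_of_nonneg hab]
    have hnn1 : (0:ℝ) ≤ a ^ (p-1) := Real.rpow_nonneg ha _
    have hnn2 : (0:ℝ) ≤ (-b) ^ (p-1) := Real.rpow_nonneg hnb _
    rw [sub_neg_eq_add, abs_of_nonneg (by positivity)]
    linarith
  rcases le_total 0 a with ha | ha
  · rcases le_total 0 b with hb | hb
    · exact keypos a b ha hb
    · exact keymix a b ha hb
  · rcases le_total 0 b with hb | hb
    · rw [abs_sub_comm, abs_sub_comm a b]; exact keymix b a hb ha
    · have := keypos (-a) (-b) (by linarith) (by linarith)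
      rw [gf_neg, gf_neg] at this
      rw [show -gf p a - -gf p b = -(gf p a - gf p b) by ring, abs_neg,
        show (-a) - (-b) = -(a - b) by ring, abs_neg] at this
      exact this

lemma tendsto_abs_rpow_zero {q : ℝ} (hq : 0 < q) :
    Filter.Tendsto (fun v : ℝ => |v| ^ q) (nhds 0) (nhds 0) := by
  have h : ContinuousAt (fun x : ℝ => x ^ q) 0 :=
    Real.continuousAt_rpow_const 0 q (Or.inr hq.le)
  have h2 : ContinuousAt (fun v : ℝ => |v| ^ q) 0 := by
    have h' : ContinuousAt (fun x : ℝ => x ^ q) (|(0:ℝ)|) := by simpa using h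
    exact h'.comp continuous_abs.continuousAt
  have h3 := h2.tendsto
  simpa [abs_zero, Real.zero_rpow hq.ne'] using h3

lemma gf_continuous {p : ℝ} (hp : 1 < p) : Continuous (gf p) := by
  rw [continuous_iff_continuousAt]
  intro u
  rcases eq_or_ne u 0 with rfl | hu
  · have h0 : gf p 0 = 0 := by simp [gf]
    unfold ContinuousAt
    rw [h0]
    apply squeeze_zero_norm (fun v => ?_) (tendsto_abs_rpow_zero (by linarith : (0:ℝ) < p - 1))
    simpa [Real.norm_eq_abs] using abs_gf_le hp.le v
  · have hcont : ContinuousAt (fun v : ℝ => |v| ^ (p - 2)) u := by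
      have h := Real.continuousAt_rpow_const |u| (p - 2) (Or.inl (abs_ne_zero.2 hu))
      exact h.comp (continuous_abs.continuousAt)
    exact continuousAt_id.mul hcont

lemma hasDerivAt_abs_rpow {p : ℝ} (hp : 1 < p) (u : ℝ) :
    HasDerivAt (fun v : ℝ => |v| ^ p) (p * gf p u) u := by
  rcases lt_trichotomy u 0 with hu | hu | hu
  · have hnu : (0:ℝ) < -u := neg_pos.2 hu
    have houter : HasDerivAt (fun w : ℝ => w ^ p) (p * (-u) ^ (p - 1)) (-u) :=
      Real.hasDerivAt_rpow_const (Or.inl hnu.ne')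
    have hinner : HasDerivAt (fun v : ℝ => -v) (-1) u := (hasDerivAt_id u).neg
    have h1 : HasDerivAt (fun v : ℝ => (-v) ^ p) (p * (-u) ^ (p - 1) * (-1)) u :=
      houter.comp u hinner
    have h2 : (fun v : ℝ => |v| ^ p) =ᶠ[nhds u] (fun v : ℝ => (-v) ^ p) := by
      filter_upwards [eventually_lt_nhds hu] with v hv
      rw [abs_of_neg hv]
    have h3 := h1.congr_of_eventuallyEq h2
    have heq : p * gf p u = p * (-u) ^ (p - 1) * (-1) := by
      rw [gf, abs_of_neg hu, show p - 1 = 1 + (p - 2) by ring, Real.rpow_add hnu,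
        Real.rpow_one]
      ring
    rw [heq]
    exact h3
  · subst hu
    have h0 : p * gf p 0 = 0 := by simp [gf]
    rw [h0, hasDerivAt_iff_tendsto_slope]
    apply squeeze_zero_norm' ?_
      ((tendsto_abs_rpow_zero (by linarith : (0:ℝ) < p - 1)).mono_left nhdsWithin_le_nhds)
    filter_upwards [self_mem_nhdsWithin] with v hv
    have hv0 : v ≠ 0 := hv
    have habs : (0:ℝ) < |v| := abs_pos.2 hv0
    rw [slope_def_field, Real.norm_eq_abs, Real.rpow_sub habs, Real.rpow_one]
    rw [show |(0:ℝ)| ^ p = 0 by simp [Real.zero_rpow (by linarith : p ≠ 0)], sub_zero, sub_zero]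
    rw [abs_div, abs_of_nonneg (Real.rpow_nonneg (abs_nonneg v) p)]

  · have houter : HasDerivAt (fun w : ℝ => w ^ p) (p * u ^ (p - 1)) u :=
      Real.hasDerivAt_rpow_const (Or.inl hu.ne')
    have h2 : (fun v : ℝ => |v| ^ p) =ᶠ[nhds u] (fun v : ℝ => v ^ p) := by
      filter_upwards [eventually_gt_nhds hu] with v hv
      rw [abs_of_pos hv]
    have h3 := houter.congr_of_eventuallyEq h2
    have heq : p * gf p u = p * u ^ (p - 1) := by
      rw [gf, abs_of_pos hu, show p - 1 = 1 + (p - 2) by ring, Real.rpow_add hu, Real.rpow_one]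
    rw [heq]
    exact h3

lemma abs_rpow_sub_one_mul {p y : ℝ} (hp : 1 < p) :
    |y| ^ (p - 1) * |y| = |y| ^ p := by
  rcases eq_or_ne y 0 with rfl | hy
  · simp [Real.zero_rpow (show p ≠ 0 by linarith)]
  · have h0 : (0:ℝ) < |y| := abs_pos.2 hy
    have : |y| ^ p = |y| ^ (p - 1) * |y| ^ (1:ℝ) := by
      rw [← Real.rpow_add h0]; norm_num
    rw [this, Real.rpow_one]

/-- The pointwise inequality for `p > 1`, via the fundamental theorem of calculus. -/
lemma pointwise_gt {p : ℝ} (hp1 : 1 < p) (hp2 : p ≤ 2) (x y : ℝ) :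
    |x + y| ^ p ≤ |x| ^ p + (p * gf p x) * y + 2 * |y| ^ p := by
  have hp0 : (0:ℝ) < p := by linarith
  have hcont : Continuous (gf p) := gf_continuous hp1
  have hderiv : ∀ s : ℝ,
      HasDerivAt (fun t : ℝ => |x + t * y| ^ p) ((p * gf p (x + s * y)) * y) s := by
    intro s
    have hinner : HasDerivAt (fun t : ℝ => x + t * y) y s := by
      simpa using ((hasDerivAt_id s).mul_const y).const_add x
    exact (hasDerivAt_abs_rpow hp1 (x + s * y)).comp s hinner
  have hcont' : Continuous fun s : ℝ => (p * gf p (x + s * y)) * y := by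
    exact ((continuous_const.mul (hcont.comp (continuous_const.add
      (continuous_id.mul continuous_const)))).mul continuous_const)
  have hftc : ∫ s in (0:ℝ)..1, (p * gf p (x + s * y)) * y
      = |x + 1 * y| ^ p - |x + 0 * y| ^ p :=
    intervalIntegral.integral_eq_sub_of_hasDerivAt (fun t _ => hderiv t)
      (hcont'.intervalIntegrable 0 1)
  have habs_pow : |y| ^ (p - 1) * |y| = |y| ^ p := abs_rpow_sub_one_mul hp1
  have hptwise : ∀ s ∈ Set.Icc (0:ℝ) 1,
      (p * gf p (x + s * y)) * y ≤ (p * gf p x) * y + 2 * p * |y| ^ p * s ^ (p - 1) := by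
    intro s hs
    have hholder : |gf p (x + s * y) - gf p x| ≤ 2 * |s * y| ^ (p - 1) := by
      have h := gf_holder hp1 hp2 (x + s * y) x
      rwa [show x + s * y - x = s * y by ring] at h
    have hd : (gf p (x + s * y) - gf p x) * y ≤ 2 * |s * y| ^ (p - 1) * |y| := by
      calc (gf p (x + s * y) - gf p x) * y ≤ |(gf p (x + s * y) - gf p x) * y| := le_abs_self _
        _ = |gf p (x + s * y) - gf p x| * |y| := abs_mul _ _
        _ ≤ 2 * |s * y| ^ (p - 1) * |y| :=
            mul_le_mul_of_nonneg_right hholder (abs_nonneg y)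
    have hrw : 2 * |s * y| ^ (p - 1) * |y| = 2 * |y| ^ p * s ^ (p - 1) := by
      rw [abs_mul, abs_of_nonneg hs.1, Real.mul_rpow hs.1 (abs_nonneg y)]
      rw [show 2 * (s ^ (p-1) * |y| ^ (p-1)) * |y| = 2 * (|y| ^ (p-1) * |y|) * s ^ (p-1) by ring,
        habs_pow]
    rw [hrw] at hd
    have h := mul_le_mul_of_nonneg_left hd hp0.le
    calc (p * gf p (x + s * y)) * y
        = (p * gf p x) * y + p * ((gf p (x + s * y) - gf p x) * y) := by ring
      _ ≤ (p * gf p x) * y + p * (2 * |y| ^ p * s ^ (p - 1)) := by linarith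
      _ = (p * gf p x) * y + 2 * p * |y| ^ p * s ^ (p - 1) := by ring
  have hcont2 : Continuous fun s : ℝ =>
      (p * gf p x) * y + 2 * p * |y| ^ p * s ^ (p - 1) := by
    exact continuous_const.add
      (continuous_const.mul (Real.continuous_rpow_const (by linarith : (0:ℝ) ≤ p - 1)))
  have hmono : ∫ s in (0:ℝ)..1, (p * gf p (x + s * y)) * y
      ≤ ∫ s in (0:ℝ)..1, ((p * gf p x) * y + 2 * p * |y| ^ p * s ^ (p - 1)) :=
    intervalIntegral.integral_mono_on zero_le_one (hcont'.intervalIntegrable 0 1)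
      (hcont2.intervalIntegrable 0 1) hptwise
  have hval : ∫ s in (0:ℝ)..1, ((p * gf p x) * y + 2 * p * |y| ^ p * s ^ (p - 1))
      = (p * gf p x) * y + 2 * |y| ^ p := by
    have hint1 : ∫ s in (0:ℝ)..1, s ^ (p - 1) = 1 / p := by
      rw [integral_rpow (Or.inl (by linarith : (-1:ℝ) < p - 1))]
      rw [show p - 1 + 1 = p by ring, Real.one_rpow, Real.zero_rpow hp0.ne']
      norm_num
    rw [intervalIntegral.integral_add (f := fun _ : ℝ => (p * gf p x) * y)
      (g := fun s : ℝ => 2 * p * |y| ^ p * s ^ (p - 1)) (intervalIntegrable_const)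
      ((continuous_const.mul (Real.continuous_rpow_const
        (by linarith : (0:ℝ) ≤ p - 1))).intervalIntegrable 0 1)]
    rw [intervalIntegral.integral_const]
    rw [intervalIntegral.integral_const_mul, hint1]
    field_simp
    ring
  rw [hval] at hmono
  rw [hftc] at hmono
  simp only [one_mul, zero_mul, add_zero] at hmono
  linarith

lemma abs_gf_one_le (x : ℝ) : |gf 1 x| ≤ 1 := by
  rcases eq_or_ne x 0 with rfl | hx
  · simp [gf]
  · have h0 : (0:ℝ) < |x| := abs_pos.2 hx
    rw [gf, show (1:ℝ) - 2 = -1 by norm_num, abs_mul,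
      abs_of_nonneg (Real.rpow_nonneg (abs_nonneg x) _), Real.rpow_neg_one,
      mul_inv_cancel₀ h0.ne']

/-- The key pointwise inequality for `1 ≤ p ≤ 2`. -/
lemma pointwise {p : ℝ} (hp1 : 1 ≤ p) (hp2 : p ≤ 2) (x y : ℝ) :
    |x + y| ^ p ≤ |x| ^ p + (p * gf p x) * y + 2 * |y| ^ p := by
  rcases hp1.eq_or_lt with h | h
  · subst h
    simp only [Real.rpow_one, one_mul]
    have h1 : |x + y| ≤ |x| + |y| := abs_add_le x y
    have h2 : -(|y|) ≤ gf 1 x * y := by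
      have h3 : |gf 1 x * y| ≤ |y| := by
        rw [abs_mul]
        calc |gf 1 x| * |y| ≤ 1 * |y| :=
              mul_le_mul_of_nonneg_right (abs_gf_one_le x) (abs_nonneg y)
          _ = |y| := one_mul _
      linarith [neg_abs_le (gf 1 x * y)]
    linarith
  · exact pointwise_gt h hp2 x y

lemma abs_rpow_pred_le {p : ℝ} (hp1 : 1 ≤ p) (u : ℝ) :
    |u| ^ (p - 1) ≤ 1 + |u| ^ p := by
  rcases le_total |u| 1 with h | h
  · have := Real.rpow_le_one (abs_nonneg u) h (by linarith : (0:ℝ) ≤ p - 1)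
    have h2 : (0:ℝ) ≤ |u| ^ p := Real.rpow_nonneg (abs_nonneg u) p
    linarith
  · have := Real.rpow_le_rpow_of_exponent_le h (by linarith : p - 1 ≤ p)
    linarith

/-- The one-step expectation inequality. -/
lemma step {Ω : Type*} [MeasurableSpace Ω] (μ : Measure Ω) [IsProbabilityMeasure μ]
    {p : ℝ} (hp1 : 1 ≤ p) (hp2 : p ≤ 2) {X Y : Ω → ℝ} (hX : Measurable X)
    (hY : Measurable Y) (hXY : IndepFun X Y μ) (hYint : Integrable Y μ)
    (hYmean : ∫ ω, Y ω ∂μ = 0) (hXp : Integrable (fun ω => |X ω| ^ p) μ)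
    (hYp : Integrable (fun ω => |Y ω| ^ p) μ) :
    Integrable (fun ω => |X ω + Y ω| ^ p) μ ∧
      ∫ ω, |X ω + Y ω| ^ p ∂μ ≤ (∫ ω, |X ω| ^ p ∂μ) + 2 * ∫ ω, |Y ω| ^ p ∂μ := by
  have hp0 : (0:ℝ) < p := by linarith
  have hgmeas : Measurable (fun u : ℝ => p * gf p u) := by
    unfold gf; fun_prop
  have hgX_meas : Measurable (fun ω => p * gf p (X ω)) := hgmeas.comp hX
  have hbnd_int : Integrable (fun ω => p + p * |X ω| ^ p) μ :=
    (integrable_const p).add (hXp.const_mul p)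
  have hgX_int : Integrable (fun ω => p * gf p (X ω)) μ := by
    refine Integrable.mono hbnd_int
      hgX_meas.aestronglyMeasurable (Filter.Eventually.of_forall fun ω => ?_)
    have h1 : |gf p (X ω)| ≤ |X ω| ^ (p - 1) := abs_gf_le hp1 (X ω)
    have h2 : |X ω| ^ (p - 1) ≤ 1 + |X ω| ^ p := abs_rpow_pred_le hp1 (X ω)
    have h3 : (0:ℝ) ≤ |X ω| ^ p := Real.rpow_nonneg (abs_nonneg _) p
    rw [Real.norm_eq_abs, Real.norm_eq_abs, abs_mul, abs_of_pos hp0,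
      abs_of_nonneg (by nlinarith : (0:ℝ) ≤ p + p * |X ω| ^ p)]
    have := mul_le_mul_of_nonneg_left (h1.trans h2) hp0.le
    nlinarith
  have hindep2 : IndepFun (fun ω => p * gf p (X ω)) Y μ :=
    hXY.comp hgmeas measurable_id
  have hmul_int : Integrable (fun ω => (p * gf p (X ω)) * Y ω) μ :=
    hindep2.integrable_mul hgX_int hYint
  have hmul_zero : ∫ ω, (p * gf p (X ω)) * Y ω ∂μ = 0 := by
    have h : ∫ ω, (p * gf p (X ω)) * Y ω ∂μ
        = (∫ ω, p * gf p (X ω) ∂μ) * ∫ ω, Y ω ∂μ :=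
      IndepFun.integral_mul_eq_mul_integral hindep2 hgX_int.aestronglyMeasurable hYint.aestronglyMeasurable
    rw [h, hYmean, mul_zero]
  have hfint : Integrable (fun ω => |X ω| ^ p + (p * gf p (X ω)) * Y ω) μ :=
    hXp.add hmul_int
  set R : Ω → ℝ := fun ω => |X ω| ^ p + (p * gf p (X ω)) * Y ω + 2 * |Y ω| ^ p with hR
  have hRint : Integrable R μ := hfint.add (hYp.const_mul 2)
  have hpt : ∀ ω, |X ω + Y ω| ^ p ≤ R ω := fun ω => pointwise hp1 hp2 (X ω) (Y ω)
  have hLmeas : Measurable (fun ω => |X ω + Y ω| ^ p) := by fun_prop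
  have hLint : Integrable (fun ω => |X ω + Y ω| ^ p) μ := by
    refine hRint.mono hLmeas.aestronglyMeasurable (Filter.Eventually.of_forall fun ω => ?_)
    rw [Real.norm_eq_abs, abs_of_nonneg (Real.rpow_nonneg (abs_nonneg _) p)]
    exact (hpt ω).trans (le_abs_self _)
  refine ⟨hLint, ?_⟩
  calc ∫ ω, |X ω + Y ω| ^ p ∂μ ≤ ∫ ω, R ω ∂μ := integral_mono hLint hRint hpt
    _ = (∫ ω, |X ω| ^ p ∂μ) + 2 * ∫ ω, |Y ω| ^ p ∂μ := by
        rw [hR]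
        rw [integral_add hfint (hYp.const_mul 2), integral_add hXp hmul_int,
          hmul_zero, integral_const_mul]
        ring

end VonBahrEsseenAux

open VonBahrEsseenAux

/-- **von Bahr–Esseen inequality.** If `ξ 1, …, ξ n` are independent random
variables with zero means and finite `p`-th absolute moments for some
`1 ≤ p ≤ 2`, and `ζ n = ξ 1 + ⋯ + ξ n`, then
`E|ζ n|^p ≤ (2 - 1/n) ∑_{k=1}^n E|ξ k|^p`. -/
theorem mean_pow_abs_sum_le
    {Ω : Type*} [MeasurableSpace Ω] (μ : Measure Ω) [IsProbabilityMeasure μ]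
    (n : ℕ) (hn : 0 < n) (ξ : Fin n → Ω → ℝ) (p : ℝ) (hp1 : 1 ≤ p) (hp2 : p ≤ 2)
    (hmeas : ∀ k, Measurable (ξ k))
    (hindep : iIndepFun ξ μ)
    (hint : ∀ k, Integrable (ξ k) μ)
    (hmean : ∀ k, ∫ ω, ξ k ω ∂μ = 0)
    (hmom : ∀ k, Integrable (fun ω => |ξ k ω| ^ p) μ) :
    ∫ ω, |∑ j, ξ j ω| ^ p ∂μ
      ≤ (2 - 1 / (n : ℝ)) * ∑ k, ∫ ω, |ξ k ω| ^ p ∂μ := by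
  classical
  set c : Fin n → ℝ := fun k => ∫ ω, |ξ k ω| ^ p ∂μ with hc
  have Q : ∀ s : Finset (Fin n), ∀ k, k ∉ s →
      Integrable (fun ω => |ξ k ω + ∑ j ∈ s, ξ j ω| ^ p) μ ∧
      ∫ ω, |ξ k ω + ∑ j ∈ s, ξ j ω| ^ p ∂μ ≤ c k + 2 * ∑ j ∈ s, c j := by
    intro s
    induction s using Finset.induction_on with
    | empty =>
      intro k _
      simp only [Finset.sum_empty, add_zero, mul_zero]
      exact ⟨hmom k, le_of_eq rfl⟩
    | @insert i s hi' ih =>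
      intro k hk
      have hki : k ≠ i := fun h => hk (h ▸ Finset.mem_insert_self i s)
      have hks : k ∉ s := fun h => hk (Finset.mem_insert_of_mem h)
      have hinotin : i ∉ insert k s := by
        simp only [Finset.mem_insert, not_or]
        exact ⟨fun h => hki h.symm, hi'⟩
      obtain ⟨ihint, ihle⟩ := ih k hks
      -- independence of the partial sum and ξ i
      have hIndep0 : IndepFun (∑ j ∈ insert k s, ξ j) (ξ i) μ :=
        hindep.indepFun_finsetSum_of_notMem hmeas hinotin
      have hsum_eq : (∑ j ∈ insert k s, ξ j) = (fun ω => ξ k ω + ∑ j ∈ s, ξ j ω) := by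
        funext ω
        rw [Finset.sum_apply, Finset.sum_insert hks]
      rw [hsum_eq] at hIndep0
      have hXmeas : Measurable (fun ω => ξ k ω + ∑ j ∈ s, ξ j ω) :=
        (hmeas k).add (Finset.measurable_sum s fun j _ => hmeas j)
      obtain ⟨hint2, hle2⟩ := step μ hp1 hp2 hXmeas (hmeas i) hIndep0 (hint i)
        (hmean i) ihint (hmom i)
      have hrw : (fun ω => |ξ k ω + ∑ j ∈ insert i s, ξ j ω| ^ p)
          = (fun ω => |(ξ k ω + ∑ j ∈ s, ξ j ω) + ξ i ω| ^ p) := by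
        funext ω
        rw [Finset.sum_insert hi']
        congr 2
        ring
      constructor
      · rw [hrw]; exact hint2
      · rw [hrw, Finset.sum_insert hi']
        calc ∫ ω, |(ξ k ω + ∑ j ∈ s, ξ j ω) + ξ i ω| ^ p ∂μ
            ≤ (∫ ω, |ξ k ω + ∑ j ∈ s, ξ j ω| ^ p ∂μ) + 2 * c i := hle2
          _ ≤ c k + 2 * ∑ j ∈ s, c j + 2 * c i := by linarith
          _ = c k + 2 * (c i + ∑ j ∈ s, c j) := by ring
  -- choose an index with maximal moment
  haveI : Nonempty (Fin n) := Fin.pos_iff_nonempty.1 hn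
  set S : ℝ := ∑ k, c k with hS
  have hnR : (0:ℝ) < (n:ℝ) := by exact_mod_cast hn
  obtain ⟨k₀, -, hk₀⟩ : ∃ k ∈ Finset.univ, S / (n:ℝ) ≤ c k := by
    apply Finset.exists_le_of_sum_le Finset.univ_nonempty
    calc ∑ _k : Fin n, S / (n:ℝ) = (n:ℝ) * (S / (n:ℝ)) := by
          rw [Finset.sum_const, Finset.card_univ, Fintype.card_fin, nsmul_eq_mul]
      _ = S := by field_simp
      _ ≤ ∑ k, c k := le_of_eq hS
  obtain ⟨-, hle⟩ := Q (Finset.univ.erase k₀) k₀ (Finset.notMem_erase k₀ _)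
  have hrw : (fun ω => |ξ k₀ ω + ∑ j ∈ Finset.univ.erase k₀, ξ j ω| ^ p)
      = (fun ω => |∑ j, ξ j ω| ^ p) := by
    funext ω
    rw [Finset.add_sum_erase Finset.univ (fun j => ξ j ω) (Finset.mem_univ k₀)]
  rw [hrw] at hle
  have hsum_erase : c k₀ + ∑ j ∈ Finset.univ.erase k₀, c j = S :=
    Finset.add_sum_erase _ c (Finset.mem_univ k₀)
  have hfinal : (2 - 1 / (n:ℝ)) * S = 2 * S - S / (n:ℝ) := by ring
  calc ∫ ω, |∑ j, ξ j ω| ^ p ∂μ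
      ≤ c k₀ + 2 * ∑ j ∈ Finset.univ.erase k₀, c j := hle
    _ = 2 * S - c k₀ := by linarith
    _ ≤ 2 * S - S / (n:ℝ) := by linarith
    _ = (2 - 1 / (n:ℝ)) * S := by ring
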